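/- arXiv:1308.5164 — 4 statements merged into one kernel-verified Lean document; each statement's English description precedes it below -/
import Mathlib

section
/- Let ℓ and m be two non-parallel lines in ℝ³ (their direction vectors are linearly independent) whose distance equals 2. Then the intersection of the closed solid unit cylinders {p : dist(p, ℓ) ≤ 1} ∩ {p : dist(p, m) ≤ 1} is a singleton: the two unit cylinders touch in exactly one point. -/
noncomputable section

/-- The point/vector `(a, b, c)` in ℝ³ (Euclidean space). -/
def vec3 (a b c : ℝ) : EuclideanSpace ℝ (Fin 3) :=
  (WithLp.equiv 2 (Fin 3 → ℝ)).symm ![a, b, c]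

/-- The line in ℝ³ through the point `P` with direction vector `w`:
the set `{P + s • w : s ∈ ℝ}`. -/
def lineThrough (P w : EuclideanSpace ℝ (Fin 3)) : Set (EuclideanSpace ℝ (Fin 3)) :=
  Set.range fun s : ℝ => P + s • w

/-- `ℓ` is a line in ℝ³: a one-dimensional affine subspace, i.e. a set of the form
`{P + s • w : s ∈ ℝ}` for some point `P` and nonzero direction vector `w`. -/
def IsLine (ℓ : Set (EuclideanSpace ℝ (Fin 3))) : Prop :=
  ∃ P w : EuclideanSpace ℝ (Fin 3), w ≠ 0 ∧ ℓ = lineThrough P w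

/-- The distance between two sets in ℝ³: the infimum of the Euclidean distances
between points of `s` and points of `t`. -/
def setDist (s t : Set (EuclideanSpace ℝ (Fin 3))) : ℝ :=
  sInf (Set.image2 dist s t)

/-- The closed solid unit cylinder with axis `ℓ`. -/
def closedCylinder (ℓ : Set (EuclideanSpace ℝ (Fin 3))) : Set (EuclideanSpace ℝ (Fin 3)) :=
  {p | Metric.infDist p ℓ ≤ 1}

local notation "E3" => EuclideanSpace ℝ (Fin 3)

lemma vectorSpan_lineThrough (P w : E3) :
    vectorSpan ℝ (lineThrough P w) = Submodule.span ℝ {w} := by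
  apply le_antisymm
  · rw [vectorSpan, Submodule.span_le]
    rintro x ⟨a, ⟨s, rfl⟩, b, ⟨t, rfl⟩, rfl⟩
    show (P + s • w) -ᵥ (P + t • w) ∈ _
    have h : (P + s • w) -ᵥ (P + t • w) = (s - t) • w := by
      simp [vsub_eq_sub, sub_smul]
    rw [h]
    exact Submodule.smul_mem _ _ (Submodule.subset_span rfl)
  · rw [Submodule.span_le, Set.singleton_subset_iff]
    have h1 : (P + (1:ℝ) • w) ∈ lineThrough P w := ⟨1, rfl⟩
    have h0 : (P + (0:ℝ) • w) ∈ lineThrough P w := ⟨0, rfl⟩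
    have := vsub_mem_vectorSpan ℝ h1 h0
    simpa using this

lemma isClosed_lineThrough (P w : E3) : IsClosed (lineThrough P w) := by
  have himg : lineThrough P w = (fun x => P + x) '' (Submodule.span ℝ {w} : Set E3) := by
    ext y
    constructor
    · rintro ⟨s, rfl⟩
      exact ⟨s • w, Submodule.mem_span_singleton.2 ⟨s, rfl⟩, rfl⟩
    · rintro ⟨x, hx, rfl⟩
      obtain ⟨s, rfl⟩ := Submodule.mem_span_singleton.1 hx
      exact ⟨s, rfl⟩
  rw [himg]
  exact (Homeomorph.addLeft P).isClosedMap _ (Submodule.span ℝ {w}).closed_of_finiteDimensional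

/-- Two non-parallel lines (their direction subspaces differ, i.e. their direction
vectors are linearly independent) at distance 2 have unit cylinders touching in
exactly one point. -/
theorem nonparallel_touching_cylinders_intersect_in_singleton
    (ℓ m : Set (EuclideanSpace ℝ (Fin 3))) (hℓ : IsLine ℓ) (hm : IsLine m)
    (hnp : vectorSpan ℝ ℓ ≠ vectorSpan ℝ m)
    (hd : setDist ℓ m = 2) :
    ∃ p : EuclideanSpace ℝ (Fin 3), closedCylinder ℓ ∩ closedCylinder m = {p} := by
  obtain ⟨P, w, hw0, rfl⟩ := hℓ
  obtain ⟨Q, v, hv0, rfl⟩ := hm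
  rw [vectorSpan_lineThrough, vectorSpan_lineThrough] at hnp
  -- linear independence of w, v
  have hindep : ∀ a b : ℝ, a • w + b • v = 0 → a = 0 ∧ b = 0 := by
    intro a b hab
    have hb : b = 0 := by
      by_contra hb
      have h1 : b • v = (-a) • w := by
        linear_combination (norm := module) hab
      have hv : v = (b⁻¹ * -a) • w := by
        rw [mul_smul, ← h1, inv_smul_smul₀ hb]
      apply hnp
      have hc : (b⁻¹ * -a) ≠ 0 := by
        intro h
        rw [h, zero_smul] at hv; exact hv0 hv
      rw [hv]
      exact (Submodule.span_singleton_smul_eq (isUnit_iff_ne_zero.2 hc) w).symm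
    refine ⟨?_, hb⟩
    rw [hb, zero_smul, add_zero] at hab
    exact (smul_eq_zero.1 hab).resolve_right hw0
  -- orthogonal decomposition
  set U : Submodule ℝ E3 := Submodule.span ℝ {w, v} with hU
  set D : E3 := P - Q with hD
  set u : E3 := (Submodule.orthogonalProjectionOnto U D : E3) with hu
  set n : E3 := D - u with hn
  have hnU : n ∈ Uᗮ := Submodule.sub_starProjection_mem_orthogonal (K := U) D
  have huU : u ∈ U := (Submodule.orthogonalProjectionOnto U D).2
  obtain ⟨α, β, huv⟩ := Submodule.mem_span_pair.1 huU
  have hwU : w ∈ U := Submodule.subset_span (by simp)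
  have hvU : v ∈ U := Submodule.subset_span (by simp)
  -- Pythagoras
  have hpyth : ∀ z ∈ U, ‖n + z‖ ^ 2 = ‖n‖ ^ 2 + ‖z‖ ^ 2 := by
    intro z hz
    have h : (inner ℝ n z : ℝ) = 0 := (Submodule.mem_orthogonal' U n).1 hnU z hz
    rw [norm_add_sq_real, h]; ring
  have hdecomp : ∀ s t : ℝ, (P + s • w) - (Q + t • v) = n + (u + s • w - t • v) := by
    intro s t
    rw [hn, hD]; abel
  have hzU : ∀ s t : ℝ, u + s • w - t • v ∈ U :=
    fun s t => Submodule.sub_mem _ (Submodule.add_mem _ huU (Submodule.smul_mem _ _ hwU))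
      (Submodule.smul_mem _ _ hvU)
  have hlow : ∀ s t : ℝ, ‖n‖ ≤ dist (P + s • w) (Q + t • v) := by
    intro s t
    rw [dist_eq_norm, hdecomp]
    have h := hpyth _ (hzU s t)
    nlinarith [norm_nonneg (n + (u + s • w - t • v)), norm_nonneg n,
      norm_nonneg (u + s • w - t • v)]
  -- the closest points
  set A : E3 := P + (-α) • w with hA
  set B : E3 := Q + β • v with hB
  have hAmem : A ∈ lineThrough P w := ⟨-α, rfl⟩
  have hBmem : B ∈ lineThrough Q v := ⟨β, rfl⟩
  have hzAB : u + (-α) • w - β • v = 0 := by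
    rw [← huv]; module
  have hABn : A - B = n := by
    rw [hA, hB]
    have := hdecomp (-α) β
    rw [this, hzAB, add_zero]
  have hABdist : dist A B = ‖n‖ := by rw [dist_eq_norm, hABn]
  -- the set distance equals ‖n‖
  have hn2 : ‖n‖ = 2 := by
    rw [← hd, setDist]
    apply le_antisymm
    · apply le_csInf
      · exact ⟨dist A B, Set.mem_image2_of_mem hAmem hBmem⟩
      · rintro x ⟨a, ⟨s, rfl⟩, b, ⟨t, rfl⟩, rfl⟩
        exact hlow s t
    · rw [← hABdist]
      apply csInf_le
      · exact ⟨0, by rintro x ⟨a, _, b, _, rfl⟩; exact dist_nonneg⟩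
      · exact Set.mem_image2_of_mem hAmem hBmem
  -- uniqueness of closest pair
  have huniq : ∀ s t : ℝ, dist (P + s • w) (Q + t • v) = 2 → P + s • w = A ∧ Q + t • v = B := by
    intro s t hst
    have hz0 : u + s • w - t • v = 0 := by
      have h := hpyth _ (hzU s t)
      rw [dist_eq_norm, hdecomp] at hst
      have : ‖u + s • w - t • v‖ ^ 2 = 0 := by nlinarith
      have := pow_eq_zero_iff (n := 2) (by norm_num) |>.1 this
      exact norm_eq_zero.1 this
    have hdiff : (s - (-α)) • w + (-(t - β)) • v = 0 := by
      have := sub_eq_zero.2 (hz0.trans hzAB.symm)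
      linear_combination (norm := module) this
    obtain ⟨h1, h2⟩ := hindep _ _ hdiff
    have hs : s = -α := by linarith [sub_eq_zero.1 (by linarith : s - (-α) = 0)]
    have ht : t = β := by linarith [neg_eq_zero.1 h2]
    constructor
    · rw [hA, hs]
    · rw [hB, ht]
  -- the touching point
  refine ⟨midpoint ℝ A B, ?_⟩
  have hdistmidA : dist (midpoint ℝ A B) A = 1 := by
    rw [dist_midpoint_left, hABdist, hn2]
    norm_num
  have hdistmidB : dist (midpoint ℝ A B) B = 1 := by
    rw [dist_midpoint_right, hABdist, hn2]
    norm_num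
  apply Set.eq_singleton_iff_unique_mem.2
  constructor
  · constructor
    · exact le_trans (Metric.infDist_le_dist_of_mem hAmem) (le_of_eq hdistmidA)
    · exact le_trans (Metric.infDist_le_dist_of_mem hBmem) (le_of_eq hdistmidB)
  · rintro q ⟨hq1, hq2⟩
    simp only [closedCylinder, Set.mem_setOf_eq] at hq1 hq2
    obtain ⟨a, haℓ, hadist⟩ := (isClosed_lineThrough P w).exists_infDist_eq_dist ⟨P, 0, by simp⟩ q
    obtain ⟨b, hbm, hbdist⟩ := (isClosed_lineThrough Q v).exists_infDist_eq_dist ⟨Q, 0, by simp⟩ q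
    obtain ⟨s, rfl⟩ := haℓ
    obtain ⟨t, rfl⟩ := hbm
    have hqa : dist q (P + s • w) ≤ 1 := by rw [hadist] at hq1; exact hq1
    have hqb : dist q (Q + t • v) ≤ 1 := by rw [hbdist] at hq2; exact hq2
    have hab2 : dist (P + s • w) (Q + t • v) ≤ 2 := by
      calc dist (P + s • w) (Q + t • v) ≤ dist (P + s • w) q + dist q (Q + t • v) :=
            dist_triangle _ _ _
        _ ≤ 2 := by rw [dist_comm (P + s • w) q]; linarith
    have hab2' : dist (P + s • w) (Q + t • v) = 2 := le_antisymm hab2 (hn2 ▸ hlow s t)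
    obtain ⟨heA, heB⟩ := huniq s t hab2'
    have hqA : dist q A ≤ 1 := heA ▸ hqa
    have hqB : dist q B ≤ 1 := heB ▸ hqb
    have habd : dist A B = 2 := by rw [← heA, ← heB]; exact hab2'
    have htri := dist_triangle A q B
    rw [dist_comm A q] at htri
    have hqa1 : dist q A = 1 := by linarith
    have hqb1 : dist q B = 1 := by linarith
    have hwbtw : Wbtw ℝ A q B := by
      rw [← dist_add_dist_eq_iff, dist_comm A q]
      linarith
    obtain ⟨r, hr, rfl⟩ := hwbtw
    have hrdist : dist (AffineMap.lineMap A B r) A = ‖r‖ * dist A B := dist_lineMap_left A B r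
    rw [hqa1, habd] at hrdist
    have hr2 : r = 1/2 := by
      have : |r| = 1/2 := by
        rw [Real.norm_eq_abs] at hrdist; linarith
      rcases abs_eq (by norm_num : (0:ℝ) ≤ 1/2) |>.1 this with h | h
      · exact h
      · exfalso; rw [h] at hr; exact absurd hr.1 (by norm_num)
    rw [hr2]
    exact lineMap_one_half A B
end
end

section
/- Let ℓ₁ be the line in ℝ³ through (0, 0, −1) with direction (1, 0, 0), and let x, y, t, u be real numbers with (u, 1 − t − u) ≠ (0, 0) (so that the direction (t, u, 1 − t − u) is nonzero and not parallel to (1, 0, 0)). Let ℓ be the line through (x, y, 0) with direction (t, u, 1 − t − u). Then the distance between ℓ₁ and ℓ equals 2 if and only if y²t² + 2y²tu − 2y²t + y²u² − 2y²u + y² + 2ytu + 2yu² − 2yu − 4t² − 8tu + 8t − 7u² + 8u − 4 = 0. -/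
noncomputable section

/-- Let `ℓ₁` be the line through `(0,0,−1)` with direction `(1,0,0)`, and `ℓ` the line
through `(x,y,0)` with direction `(t,u,1−t−u)`, where `(u, 1−t−u) ≠ (0,0)`. Then
`d(ℓ₁, ℓ) = 2` iff the following polynomial equation holds. -/
theorem dist_line1_eq_two_iff
    (x y t u : ℝ) (h : (u, 1 - t - u) ≠ (0, 0)) :
    setDist (lineThrough (vec3 0 0 (-1)) (vec3 1 0 0))
        (lineThrough (vec3 x y 0) (vec3 t u (1 - t - u))) = 2 ↔
      y ^ 2 * t ^ 2 + 2 * y ^ 2 * t * u - 2 * y ^ 2 * t + y ^ 2 * u ^ 2 - 2 * y ^ 2 * u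
          + y ^ 2 + 2 * y * t * u + 2 * y * u ^ 2 - 2 * y * u
          - 4 * t ^ 2 - 8 * t * u + 8 * t - 7 * u ^ 2 + 8 * u - 4 = 0 := by
  have hA : 0 < u ^ 2 + (1 - t - u) ^ 2 := by
    have h' : u ≠ 0 ∨ (1 - t - u) ≠ 0 := by
      by_contra hc
      push_neg at hc
      exact h (by rw [Prod.mk.injEq]; exact hc)
    rcases h' with h' | h' <;> positivity
  have hdist : ∀ s r : ℝ,
      dist (vec3 0 0 (-1) + s • vec3 1 0 0) (vec3 x y 0 + r • vec3 t u (1 - t - u))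
        = Real.sqrt ((s - (x + r*t))^2 + (y + r*u)^2 + (1 + r*(1-t-u))^2) := by
    intro s r
    rw [EuclideanSpace.dist_eq]
    congr 1
    simp [vec3, Fin.sum_univ_three, Real.dist_eq, sq_abs]
    ring
  have hQ0 : (0:ℝ) ≤ (y * (1-t-u) - u) ^ 2 / (u ^ 2 + (1-t-u) ^ 2) := by positivity
  have key : setDist (lineThrough (vec3 0 0 (-1)) (vec3 1 0 0))
      (lineThrough (vec3 x y 0) (vec3 t u (1 - t - u)))
      = Real.sqrt ((y * (1-t-u) - u) ^ 2 / (u ^ 2 + (1-t-u) ^ 2)) := by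
    apply le_antisymm
    · set r₀ : ℝ := -(y*u + (1-t-u)) / (u^2 + (1-t-u)^2) with hr₀
      set s₀ : ℝ := x + r₀ * t with hs₀
      have hmem : dist (vec3 0 0 (-1) + s₀ • vec3 1 0 0)
          (vec3 x y 0 + r₀ • vec3 t u (1 - t - u)) ∈
          Set.image2 dist (lineThrough (vec3 0 0 (-1)) (vec3 1 0 0))
            (lineThrough (vec3 x y 0) (vec3 t u (1 - t - u))) :=
        Set.mem_image2_of_mem ⟨s₀, rfl⟩ ⟨r₀, rfl⟩
      have hbdd : BddBelow (Set.image2 dist (lineThrough (vec3 0 0 (-1)) (vec3 1 0 0))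
            (lineThrough (vec3 x y 0) (vec3 t u (1 - t - u)))) :=
        ⟨0, by rintro d ⟨p, hp, q, hq, rfl⟩; exact dist_nonneg⟩
      refine le_trans (csInf_le hbdd hmem) ?_
      rw [hdist]
      apply le_of_eq
      congr 1
      rw [eq_div_iff hA.ne', hs₀, hr₀, div_eq_mul_inv]
      field_simp
      ring
    · apply le_csInf
      · exact ⟨_, Set.mem_image2_of_mem ⟨0, rfl⟩ ⟨0, rfl⟩⟩
      · rintro d ⟨p, ⟨s, rfl⟩, q, ⟨r, rfl⟩, rfl⟩
        rw [hdist]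
        apply Real.sqrt_le_sqrt
        rw [div_le_iff₀ hA]
        nlinarith [sq_nonneg ((u^2+(1-t-u)^2)*r + (y*u+(1-t-u))), sq_nonneg (s - (x + r*t)), hA]
  rw [key]
  constructor
  · intro h2
    have hQ4 : (y * (1-t-u) - u) ^ 2 / (u ^ 2 + (1-t-u) ^ 2) = 4 := by
      have := Real.sq_sqrt hQ0
      rw [h2] at this
      linarith
    rw [div_eq_iff hA.ne'] at hQ4
    linear_combination hQ4
  · intro hp
    have hQ4 : (y * (1-t-u) - u) ^ 2 / (u ^ 2 + (1-t-u) ^ 2) = 4 := by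
      rw [div_eq_iff hA.ne']
      linear_combination hp
    rw [hQ4, show (4:ℝ) = 2^2 by norm_num, Real.sqrt_sq (by norm_num)]
end
end

section
/- Let ℓ₂ be the line in ℝ³ through (0, 0, 1) with direction (0, 1, 0), and let x, y, t, u be real numbers with (t, 1 − t − u) ≠ (0, 0) (so that the direction (t, u, 1 − t − u) is nonzero and not parallel to (0, 1, 0)). Let ℓ be the line through (x, y, 0) with direction (t, u, 1 − t − u). Then the distance between ℓ₂ and ℓ equals 2 if and only if x²t² + 2x²tu − 2x²t + x²u² − 2x²u + x² − 2xtu − 2xt² + 2xt − 4u² − 8tu + 8t − 7t² + 8u − 4 = 0. -/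
noncomputable section

lemma vec3_add_smul (a b c s d e f : ℝ) :
    vec3 a b c + s • vec3 d e f = vec3 (a + s*d) (b + s*e) (c + s*f) := by
  ext i; fin_cases i <;> simp [vec3]

lemma dist_vec3 (a b c d e f : ℝ) :
    dist (vec3 a b c) (vec3 d e f) = Real.sqrt ((a-d)^2 + (b-e)^2 + (c-f)^2) := by
  simp [vec3, EuclideanSpace.dist_eq, Fin.sum_univ_three, Real.dist_eq, sq_abs]

/-- Let `ℓ₂` be the line through `(0,0,1)` with direction `(0,1,0)`, and `ℓ` the line
through `(x,y,0)` with direction `(t,u,1−t−u)`, where `(t, 1−t−u) ≠ (0,0)`. Then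
`d(ℓ₂, ℓ) = 2` iff the following polynomial equation holds. -/
theorem dist_line2_eq_two_iff
    (x y t u : ℝ) (h : (t, 1 - t - u) ≠ (0, 0)) :
    setDist (lineThrough (vec3 0 0 1) (vec3 0 1 0))
        (lineThrough (vec3 x y 0) (vec3 t u (1 - t - u))) = 2 ↔
      x ^ 2 * t ^ 2 + 2 * x ^ 2 * t * u - 2 * x ^ 2 * t + x ^ 2 * u ^ 2 - 2 * x ^ 2 * u
          + x ^ 2 - 2 * x * t * u - 2 * x * t ^ 2 + 2 * x * t
          - 4 * u ^ 2 - 8 * t * u + 8 * t - 7 * t ^ 2 + 8 * u - 4 = 0 := by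
  have hne : t ≠ 0 ∨ 1 - t - u ≠ 0 := by
    by_contra hcon
    push_neg at hcon
    exact h (by simp [Prod.ext_iff, hcon.1]; linarith [hcon.2])
  set c : ℝ := 1 - t - u with hc
  have hD : 0 < t^2 + c^2 := by rcases hne with h'|h' <;> positivity
  set D : ℝ := t^2 + c^2 with hDdef
  have hsD : 0 < Real.sqrt D := Real.sqrt_pos.2 hD
  set d : ℝ := |x*c + t| / Real.sqrt D with hd
  have key : setDist (lineThrough (vec3 0 0 1) (vec3 0 1 0))
      (lineThrough (vec3 x y 0) (vec3 t u c)) = d := by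
    unfold setDist lineThrough
    apply le_antisymm
    · apply csInf_le
      · refine ⟨0, ?_⟩
        rintro a ⟨p, _, q, _, rfl⟩
        exact dist_nonneg
      · refine ⟨_, Set.mem_range_self (y + ((c - x*t)/D)*u), _,
          Set.mem_range_self ((c - x*t)/D), ?_⟩
        rw [vec3_add_smul, vec3_add_smul, dist_vec3, hd]
        rw [show (0 + (y + (c - x*t)/D*u)*0 - (x + (c - x*t)/D*t))^2
            + (0 + (y + (c - x*t)/D*u)*1 - (y + (c - x*t)/D*u))^2
            + (1 + (y + (c - x*t)/D*u)*0 - (0 + (c - x*t)/D*c))^2 = (x*c+t)^2 / D by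
          field_simp; ring]
        rw [Real.sqrt_div (sq_nonneg _), Real.sqrt_sq_eq_abs]
    · refine le_csInf ⟨_, Set.mem_image2_of_mem (Set.mem_range_self 0) (Set.mem_range_self 0)⟩ ?_
      rintro a ⟨p, ⟨s, rfl⟩, q, ⟨s', rfl⟩, rfl⟩
      dsimp only
      rw [vec3_add_smul, vec3_add_smul, dist_vec3, hd, div_le_iff₀ hsD]
      rw [show Real.sqrt ((0 + s*0 - (x + s'*t))^2 + (0 + s*1 - (y + s'*u))^2
          + (1 + s*0 - (0 + s'*c))^2) * Real.sqrt D
        = Real.sqrt (((0 + s*0 - (x + s'*t))^2 + (0 + s*1 - (y + s'*u))^2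
          + (1 + s*0 - (0 + s'*c))^2) * D) from
        (Real.sqrt_mul (by positivity) _).symm]
      rw [← Real.sqrt_sq_eq_abs]
      apply Real.sqrt_le_sqrt
      nlinarith [sq_nonneg (t*(x + s'*t) + c*(s'*c - 1)), sq_nonneg (s - (y + s'*u)),
        sq_nonneg (x + s'*t), sq_nonneg (s'*c - 1), hD.le]
  rw [key, hd, div_eq_iff hsD.ne']
  have hpoly : x ^ 2 * t ^ 2 + 2 * x ^ 2 * t * u - 2 * x ^ 2 * t + x ^ 2 * u ^ 2 - 2 * x ^ 2 * u
          + x ^ 2 - 2 * x * t * u - 2 * x * t ^ 2 + 2 * x * t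
          - 4 * u ^ 2 - 8 * t * u + 8 * t - 7 * t ^ 2 + 8 * u - 4
      = (x*c+t)^2 - 4*D := by rw [hc, hDdef]; ring
  rw [hpoly]
  constructor
  · intro hEq
    have h2 := congrArg (·^2) hEq
    simp only [mul_pow, sq_abs, Real.sq_sqrt hD.le] at h2
    nlinarith [h2]
  · intro hEq
    have hA : (x*c+t)^2 = 4*D := by linarith
    rw [← Real.sqrt_sq_eq_abs, hA,
      show (4:ℝ)*D = (2*Real.sqrt D)^2 by rw [mul_pow, Real.sq_sqrt hD.le]; norm_num]
    exact Real.sqrt_sq (by positivity)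
end
end

section
/- Krawczyk's verification theorem: let F : ℝⁿ → ℝⁿ be continuously differentiable, let x ∈ ℝⁿ, r > 0, and let [x]ᵣ = {y ∈ ℝⁿ : ‖y − x‖∞ ≤ r} be the closed ball of radius r around x in the infinity norm. Suppose the derivative DF(x) is invertible, and the Krawczyk set K(F, [x]ᵣ) = { x − DF(x)⁻¹ F(x) + (I − DF(x)⁻¹ DF(y)) (z − x) : y ∈ [x]ᵣ, z ∈ [x]ᵣ } is contained in the interior of [x]ᵣ. Then F has exactly one zero in [x]ᵣ. -/
noncomputable section

/-- **Krawczyk's verification theorem.** Let `F : ℝⁿ → ℝⁿ` be continuously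
differentiable (here `ℝⁿ = Fin n → ℝ` carries the infinity norm, so that
`Metric.closedBall x r` is the ball `[x]ᵣ = {y : ‖y − x‖∞ ≤ r}`). Suppose the
derivative `DF(x)` is invertible, with inverse given by the continuous linear
equivalence `A` (so `A = DF(x)` as a continuous linear map), and that the Krawczyk set
`K(F,[x]ᵣ) = {x − DF(x)⁻¹ F(x) + (I − DF(x)⁻¹ DF(y))(z − x) : y, z ∈ [x]ᵣ}`
is contained in the interior of `[x]ᵣ`. Then `F` has exactly one zero in `[x]ᵣ`. -/
theorem krawczyk_verification {n : ℕ}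
    (F : (Fin n → ℝ) → (Fin n → ℝ)) (hF : ContDiff ℝ 1 F)
    (x : Fin n → ℝ) (r : ℝ) (hr : 0 < r)
    (A : (Fin n → ℝ) ≃L[ℝ] (Fin n → ℝ))
    (hA : (A : (Fin n → ℝ) →L[ℝ] (Fin n → ℝ)) = fderiv ℝ F x)
    (hK : {p : Fin n → ℝ |
          ∃ y ∈ Metric.closedBall x r, ∃ z ∈ Metric.closedBall x r,
            p = x - A.symm (F x) + ((z - x) - A.symm (fderiv ℝ F y (z - x)))}
        ⊆ interior (Metric.closedBall x r)) :
    ∃! ξ : Fin n → ℝ, ξ ∈ Metric.closedBall x r ∧ F ξ = 0 := by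
  classical
  have hFd : Differentiable ℝ F := hF.differentiable one_ne_zero
  have hFc : Continuous (fderiv ℝ F) := hF.continuous_fderiv one_ne_zero
  set s := Metric.closedBall x r with hs
  have hsx : x ∈ s := Metric.mem_closedBall_self hr.le
  set B : (Fin n → ℝ) →L[ℝ] (Fin n → ℝ) := (A.symm : (Fin n → ℝ) →L[ℝ] (Fin n → ℝ)) with hB
  set L : (Fin n → ℝ) → (Fin n → ℝ) →L[ℝ] (Fin n → ℝ) :=
    fun y => ContinuousLinearMap.id ℝ (Fin n → ℝ) - B.comp (fderiv ℝ F y) with hLdef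
  have hLval : ∀ y v, L y v = v - A.symm (fderiv ℝ F y v) := by
    intro y v; simp [hLdef, hB]
  -- K inside open ball
  have hK' : ∀ y ∈ s, ∀ z ∈ s,
      ‖(x - A.symm (F x) + ((z - x) - A.symm (fderiv ℝ F y (z - x)))) - x‖ < r := by
    intro y hy z hz
    have h := hK ⟨y, hy, z, hz, rfl⟩
    rw [interior_closedBall x hr.ne'] at h
    simpa [Metric.mem_ball, dist_eq_norm] using h
  -- pointwise bound on L
  have hLv : ∀ y ∈ s, ∀ v : Fin n → ℝ, ‖v‖ ≤ r → ‖L y v‖ < r := by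
    intro y hy v hv
    have hz1 : x + v ∈ s := by
      simp only [hs, Metric.mem_closedBall, dist_eq_norm]
      simpa using hv
    have hz2 : x - v ∈ s := by
      simp only [hs, Metric.mem_closedBall, dist_eq_norm]
      simpa using hv
    have h1 := hK' y hy (x + v) hz1
    have h2 := hK' y hy (x - v) hz2
    set w : Fin n → ℝ := -A.symm (F x) with hw
    have e1 : (x - A.symm (F x) + ((x + v - x) - A.symm (fderiv ℝ F y (x + v - x)))) - x
        = w + L y v := by
      rw [hLval]; simp only [hw, add_sub_cancel_left]; abel
    have e2 : (x - A.symm (F x) + ((x - v - x) - A.symm (fderiv ℝ F y (x - v - x)))) - x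
        = w - L y v := by
      rw [hLval]
      simp only [hw, sub_sub_cancel_left, map_neg]
      abel
    rw [e1] at h1; rw [e2] at h2
    have key : (2:ℝ) • L y v = (w + L y v) - (w - L y v) := by
      rw [two_smul]; abel
    have : ‖(2:ℝ) • L y v‖ ≤ ‖w + L y v‖ + ‖w - L y v‖ := by
      rw [key]; exact norm_sub_le _ _
    rw [norm_smul] at this
    simp only [Real.norm_ofNat] at this
    linarith
  -- operator norm bound
  have hLnorm : ∀ y ∈ s, ‖L y‖ < 1 := by
    intro y hy
    obtain ⟨v₀, hv₀, hmax⟩ := (isCompact_closedBall (0 : Fin n → ℝ) r).exists_isMaxOn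
      (Metric.nonempty_closedBall.2 hr.le) ((L y).continuous.norm.continuousOn)
    have hv₀' : ‖v₀‖ ≤ r := by simpa [mem_closedBall_zero_iff] using hv₀
    have hM : ‖L y v₀‖ < r := hLv y hy v₀ hv₀'
    have hb : ‖L y‖ ≤ ‖L y v₀‖ / r := by
      apply ContinuousLinearMap.opNorm_le_bound _ (div_nonneg (norm_nonneg _) hr.le)
      intro u
      rcases eq_or_ne u 0 with rfl | hu
      · simp
      · have hu' : 0 < ‖u‖ := norm_pos_iff.2 hu
        have hmem : (r / ‖u‖) • u ∈ Metric.closedBall (0 : Fin n → ℝ) r := by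
          rw [mem_closedBall_zero_iff, norm_smul, Real.norm_eq_abs,
            abs_of_pos (div_pos hr hu'), div_mul_cancel₀ _ hu'.ne']
        have h : ‖L y ((r / ‖u‖) • u)‖ ≤ ‖L y v₀‖ := hmax hmem
        rw [map_smul, norm_smul, Real.norm_eq_abs, abs_of_pos (div_pos hr hu')] at h
        rw [div_mul_eq_mul_div, le_div_iff₀ hr]
        rw [div_mul_eq_mul_div, div_le_iff₀ hu'] at h
        nlinarith [norm_nonneg (L y u)]
    exact hb.trans_lt ((div_lt_one hr).2 hM)
  -- continuity of L, global bound
  have hLcont : Continuous L := by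
    have h2 : Continuous fun y => B.comp (fderiv ℝ F y) :=
      ((ContinuousLinearMap.compL ℝ (Fin n → ℝ) (Fin n → ℝ) (Fin n → ℝ)) B).continuous.comp hFc
    exact continuous_const.sub h2
  obtain ⟨y₀, hy₀, hmax⟩ := (isCompact_closedBall x r).exists_isMaxOn
    (Metric.nonempty_closedBall.2 hr.le) (hLcont.norm.continuousOn)
  set κ := ‖L y₀‖ with hκdef
  have hκ1 : κ < 1 := hLnorm y₀ hy₀
  have hκ0 : 0 ≤ κ := norm_nonneg _
  -- the Newton-Krawczyk map
  set G : (Fin n → ℝ) → (Fin n → ℝ) := fun w => w - A.symm (F w) with hGdef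
  have hGd : ∀ w, HasFDerivAt G (L w) w := by
    intro w
    have h1 : HasFDerivAt (fun w => A.symm (F w)) (B.comp (fderiv ℝ F w)) w :=
      (B.hasFDerivAt).comp w (hFd w).hasFDerivAt
    exact (hasFDerivAt_id w).sub h1
  have hGfderiv : ∀ w, fderiv ℝ G w = L w := fun w => (hGd w).fderiv
  -- Lipschitz bound on s
  have hlip : ∀ z₁ ∈ s, ∀ z₂ ∈ s, ‖G z₂ - G z₁‖ ≤ κ * ‖z₂ - z₁‖ := by
    intro z₁ h1 z₂ h2
    exact (convex_closedBall x r).norm_image_sub_le_of_norm_fderiv_le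
      (fun w _ => (hGd w).differentiableAt)
      (fun w hw => by rw [hGfderiv]; exact hmax hw) h1 h2
  -- self map
  have hself : Set.MapsTo G s s := by
    intro z hz
    set v : Fin n → ℝ := z - x with hv
    have hpath : ∀ t : ℝ, t ∈ Set.Icc (0:ℝ) 1 → x + t • v ∈ s := by
      intro t ht
      simp only [hs, Metric.mem_closedBall, dist_eq_norm, add_sub_cancel_left]
      rw [norm_smul, Real.norm_eq_abs, abs_of_nonneg ht.1]
      have hvr : ‖v‖ ≤ r := by
        simpa [hs, Metric.mem_closedBall, hv, dist_eq_norm] using hz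
      calc t * ‖v‖ ≤ 1 * ‖v‖ := mul_le_mul_of_nonneg_right ht.2 (norm_nonneg v)
        _ = ‖v‖ := one_mul _
        _ ≤ r := hvr
    have hderiv : ∀ t ∈ Set.uIcc (0:ℝ) 1,
        HasDerivAt (fun t : ℝ => G (x + t • v)) (L (x + t • v) v) t := by
      intro t _
      have h1 : HasDerivAt (fun t : ℝ => x + t • v) v t := by
        simpa using ((hasDerivAt_id t).smul_const v).const_add x
      exact (hGd (x + t • v)).comp_hasDerivAt t h1
    have hcont : Continuous fun t : ℝ => L (x + t • v) v := by
      have : Continuous fun t : ℝ => L (x + t • v) :=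
        hLcont.comp (continuous_const.add (continuous_id.smul continuous_const))
      exact (ContinuousLinearMap.apply ℝ (Fin n → ℝ) v).continuous.comp this
    have hint : ∫ t in (0:ℝ)..1, L (x + t • v) v = G z - G x := by
      rw [intervalIntegral.integral_eq_sub_of_hasDerivAt hderiv
        (hcont.intervalIntegrable 0 1)]
      simp [hv]
    have key : G z - x = ∫ t in (0:ℝ)..1, ((G x - x) + L (x + t • v) v) := by
      rw [intervalIntegral.integral_add (intervalIntegrable_const (c := G x - x))
        (hcont.intervalIntegrable 0 1), hint, intervalIntegral.integral_const]
      simp only [sub_zero, one_smul]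
      abel
    have hb : ‖G z - x‖ ≤ r := by
      rw [key]
      have hle := intervalIntegral.norm_integral_le_of_norm_le_const
        (C := r) (f := fun t : ℝ => (G x - x) + L (x + t • v) v) (a := 0) (b := 1) ?_
      · simpa using hle
      · intro t ht
        have ht' : t ∈ Set.Icc (0:ℝ) 1 := by
          rw [Set.uIoc_of_le zero_le_one] at ht
          exact ⟨ht.1.le, ht.2⟩
        have hy := hpath t ht'
        have hKb := hK' _ hy z hz
        have e : (x - A.symm (F x) + ((z - x) - A.symm (fderiv ℝ F (x + t • v) (z - x)))) - x
            = (G x - x) + L (x + t • v) v := by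
          rw [hLval]
          simp only [hGdef, hv]
          abel
        rw [e] at hKb
        exact hKb.le
    simpa [hs, Metric.mem_closedBall, dist_eq_norm] using hb
  -- Banach fixed point
  set κ' : NNReal := ⟨κ, hκ0⟩ with hκ'
  have hcw : ContractingWith κ' (hself.restrict G s s) := by
    constructor
    · exact_mod_cast hκ1
    · apply LipschitzWith.of_dist_le_mul
      rintro ⟨a, ha⟩ ⟨b, hb⟩
      simp only [Set.MapsTo.restrict, Subtype.dist_eq, Subtype.coe_mk, dist_eq_norm]
      exact hlip b hb a ha
  obtain ⟨ξ, hξs, hξfix, -⟩ := hcw.exists_fixedPoint'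
    (Metric.isClosed_closedBall.isComplete) hself hsx (edist_ne_top _ _)
  have hfix_iff : ∀ w, G w = w ↔ F w = 0 := by
    intro w
    constructor
    · intro h
      have h2 : A.symm (F w) = 0 := sub_eq_self.mp h
      have := congrArg A h2
      simpa using this
    · intro h; simp [hGdef, h]
  refine ⟨ξ, ⟨hξs, (hfix_iff ξ).1 hξfix⟩, ?_⟩
  rintro ζ ⟨hζs, hζ0⟩
  have hζfix : G ζ = ζ := (hfix_iff ζ).2 hζ0
  by_contra hne
  have hd : ‖ζ - ξ‖ ≤ κ * ‖ζ - ξ‖ := by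
    have := hlip ξ hξs ζ hζs
    rwa [hζfix, hξfix] at this
  have hpos : 0 < ‖ζ - ξ‖ := by
    rw [norm_pos_iff, sub_ne_zero]; exact hne
  nlinarith
end
end
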